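/- Let n ≥ 1 and q_1,…,q_n, c_1,…,c_n be reals with c_i > 0, 0 < c_i ≤ q_i, sorted so that c_i/q_i is nondecreasing. Let UA = max_{k∈[n]} (1 - c_k/q_k)·∑_{i≤k} q_i. Then for every S ⊆ [n], ∑_{ℓ∈S}(q_ℓ - c_ℓ) ≤ UA · ∑_{ℓ∈S} c_ℓ / (∑_{i=1}^{ℓ} c_i). (Proof: with t maximizing (q_t/c_t - 1)·∑_{i≤t} c_i, one has (q_ℓ/c_ℓ - 1) ≤ (q_t/c_t - 1)·(∑_{i≤t}c_i)/(∑_{i≤ℓ}c_i), and (q_t/c_t - 1)·∑_{i≤t}c_i ≤ (1 - c_t/q_t)·∑_{i≤t}q_i ≤ UA, using ∑_{i≤t}c_i/∑_{i≤t}q_i ≤ c_t/q_t.) -/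

import Mathlib

theorem welfare_le_UA_times_sum_c (n : ℕ) (hn : 1 ≤ n) (q c : ℕ → ℝ)
    (hq : ∀ i ∈ Finset.Icc 1 n, q i ≤ 1)
    (hc : ∀ i ∈ Finset.Icc 1 n, 0 < c i ∧ c i ≤ q i)
    (hsorted : ∀ i ∈ Finset.Icc 1 n, ∀ j ∈ Finset.Icc 1 n, i ≤ j → c i / q i ≤ c j / q j)
    (UA : ℝ)
    (hUA : UA = (Finset.Icc 1 n).sup' (Finset.nonempty_Icc.mpr hn)
      (fun k => (1 - c k / q k) * ∑ i ∈ Finset.Icc 1 k, q i)) :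
    ∀ S ⊆ Finset.Icc 1 n,
      ∑ ℓ ∈ S, (q ℓ - c ℓ) ≤ UA * ∑ ℓ ∈ S, c ℓ / (∑ i ∈ Finset.Icc 1 ℓ, c i) := by
  intro S hS
  rw [Finset.mul_sum]
  apply Finset.sum_le_sum
  intro ℓ hℓS
  have hℓ := hS hℓS
  have hℓn := Finset.mem_Icc.mp hℓ
  have hcℓ := hc ℓ hℓ
  have hqℓ : 0 < q ℓ := lt_of_lt_of_le hcℓ.1 hcℓ.2
  set Cℓ := ∑ i ∈ Finset.Icc 1 ℓ, c i with hCdef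
  set Qℓ := ∑ i ∈ Finset.Icc 1 ℓ, q i with hQdef
  have hsub : Finset.Icc 1 ℓ ⊆ Finset.Icc 1 n := by
    intro i hi
    have := Finset.mem_Icc.mp hi
    exact Finset.mem_Icc.mpr ⟨this.1, le_trans this.2 hℓn.2⟩
  have hCpos : 0 < Cℓ := by
    apply Finset.sum_pos
    · intro i hi; exact (hc i (hsub hi)).1
    · exact Finset.nonempty_Icc.mpr hℓn.1
  -- key: Cℓ * q ℓ ≤ Qℓ * c ℓ
  have hkey : Cℓ * q ℓ ≤ Qℓ * c ℓ := by
    rw [Finset.sum_mul, Finset.sum_mul]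
    apply Finset.sum_le_sum
    intro i hi
    have hin := hsub hi
    have hci := hc i hin
    have hqi : 0 < q i := lt_of_lt_of_le hci.1 hci.2
    have hs := hsorted i hin ℓ hℓ (Finset.mem_Icc.mp hi).2
    rw [div_le_div_iff₀ hqi hqℓ] at hs
    linarith
  have hsup : (1 - c ℓ / q ℓ) * Qℓ ≤ UA := by
    rw [hUA]
    exact Finset.le_sup' (fun k => (1 - c k / q k) * ∑ i ∈ Finset.Icc 1 k, q i) hℓ
  have hcℓnn : (0:ℝ) ≤ c ℓ := le_of_lt hcℓ.1
  rw [show UA * (c ℓ / Cℓ) = UA * c ℓ / Cℓ by ring, le_div_iff₀ hCpos]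
  have h1 : (q ℓ - c ℓ) * Cℓ ≤ (1 - c ℓ / q ℓ) * Qℓ * c ℓ := by
    have hqCd : (1 - c ℓ / q ℓ) * Qℓ * c ℓ = (q ℓ - c ℓ) * (Qℓ * c ℓ / q ℓ) := by
      field_simp
    rw [hqCd]
    have hC2 : Cℓ ≤ Qℓ * c ℓ / q ℓ := by
      rw [le_div_iff₀ hqℓ]; exact hkey
    exact mul_le_mul_of_nonneg_left hC2 (by linarith [hcℓ.2])
  calc (q ℓ - c ℓ) * Cℓ ≤ (1 - c ℓ / q ℓ) * Qℓ * c ℓ := h1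
    _ ≤ UA * c ℓ := mul_le_mul_of_nonneg_right hsup hcℓnn
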